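/- If (ε/β)(p+1) ln(N−4) < 1, then e^{−βx_{N/4−1}/ε} + e^{−β(1−x_{3N/4+1})/ε} ≤ C N^{−(p+1)}, where C depends only on p (one may take C = 2·6^{p+1}). -/

import Mathlib

/-- The constant `C_{p,ε} = 1 − exp(−β/((p+1)ε))`. -/
noncomputable def Cpe (p : ℕ) (β ε : ℝ) : ℝ :=
  1 - Real.exp (-(β / (((p:ℝ) + 1) * ε)))

/-- The mesh generating function `φ(t) = −ln(1 − 4 C_{p,ε} t)`. -/
noncomputable def phiFun (c : ℝ) : ℝ → ℝ := fun t => -Real.log (1 - 4 * c * t)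

/-- The graded nodes `x_j = (ε/β)(p+1)φ(j/N)`. -/
noncomputable def gradedNode (p N : ℕ) (β ε : ℝ) (j : ℕ) : ℝ :=
  (ε / β) * ((p:ℝ) + 1) * phiFun (Cpe p β ε) ((j:ℝ) / (N:ℝ))

/-- The nodes of the exponentially graded (eXp) mesh on `[0,1]`:
graded on `[0, x_{N/4−1}]` and `[x_{3N/4+1}, 1]`, uniform (with `N/2+2`
equal subintervals of `[x_{N/4−1}, x_{3N/4+1}]`) in between. -/
noncomputable def expNode (p N : ℕ) (β ε : ℝ) (j : ℕ) : ℝ :=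
  if j ≤ N / 4 - 1 then gradedNode p N β ε j
  else if j ≤ 3 * N / 4 then
    gradedNode p N β ε (N / 4 - 1) +
      ((1 - 2 * gradedNode p N β ε (N / 4 - 1)) / ((N:ℝ) / 2 + 2)) *
        ((j:ℝ) - ((N:ℝ) / 4 - 1))
  else 1 - (ε / β) * ((p:ℝ) + 1) * phiFun (Cpe p β ε) (((N - j : ℕ):ℝ) / (N:ℝ))

lemma exp_node_pow (p : ℕ) (β ε s : ℝ) (hβ : β ≠ 0) (hε : ε ≠ 0) (hs : 0 < s) :
    Real.exp (-(β * ((ε / β) * ((p:ℝ) + 1) * (-Real.log s)) / ε)) = s ^ (p + 1) := by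
  have h : -(β * ((ε / β) * ((p:ℝ) + 1) * (-Real.log s)) / ε)
      = ((p + 1 : ℕ) : ℝ) * Real.log s := by
    push_cast
    field_simp
  rw [h, Real.exp_nat_mul, Real.exp_log hs]

/-- if `(ε/β)(p+1)ln(N−4) < 1` then
`e^{−βx_{N/4−1}/ε} + e^{−β(1−x_{3N/4+1})/ε} ≤ C N^{−(p+1)}`
with `C = 2·6^{p+1}` (depending only on `p`). -/
theorem stmt_3 (p N : ℕ) (hp : 3 ≤ p) (hN : 8 ≤ N) (hdvd : 4 ∣ N)
    (β ε : ℝ) (hβ : 0 < β) (hε : ε ∈ Set.Ioc (0:ℝ) 1)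
    (hsp : (ε / β) * ((p:ℝ) + 1) * Real.log ((N:ℝ) - 4) < 1) :
    Real.exp (-(β * expNode p N β ε (N / 4 - 1) / ε))
      + Real.exp (-(β * (1 - expNode p N β ε (3 * N / 4 + 1)) / ε))
      ≤ 2 * 6 ^ (p + 1) * (N:ℝ) ^ (-((p:ℤ) + 1)) := by
  obtain ⟨m, rfl⟩ := hdvd
  have hm : 2 ≤ m := by omega
  have hε0 : 0 < ε := hε.1
  have hβne : β ≠ 0 := ne_of_gt hβ
  have hεne : ε ≠ 0 := ne_of_gt hε0
  have hmR : (2:ℝ) ≤ (m:ℝ) := by exact_mod_cast hm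
  have hidx1 : 4 * m / 4 - 1 = m - 1 := by omega
  have hidx2 : 3 * (4 * m) / 4 + 1 = 3 * m + 1 := by omega
  -- the exponential constant A
  set A := Real.exp (-(β / (((p:ℝ) + 1) * ε))) with hAdef
  have hA0 : 0 < A := Real.exp_pos _
  have hA1 : A < 1 := by
    rw [hAdef, Real.exp_lt_one_iff]
    have : 0 < β / (((p:ℝ) + 1) * ε) := by positivity
    linarith
  -- A ≤ 1/(2m)
  have hA2 : A ≤ 1 / (2 * (m:ℝ)) := by
    have hcast : ((4 * m : ℕ) : ℝ) - 4 = 4 * (m:ℝ) - 4 := by push_cast; ring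
    rw [hcast] at hsp
    have hlog : Real.log (4 * (m:ℝ) - 4) < β / (((p:ℝ) + 1) * ε) := by
      rw [lt_div_iff₀ (by positivity)]
      have h := mul_lt_mul_of_pos_left hsp hβ
      have heq : β * (ε / β * ((p:ℝ) + 1) * Real.log (4 * (m:ℝ) - 4))
          = Real.log (4 * (m:ℝ) - 4) * (((p:ℝ) + 1) * ε) := by
        field_simp
      rw [heq] at h
      linarith
    have h1 : A < Real.exp (-Real.log (4 * (m:ℝ) - 4)) := by
      rw [hAdef, Real.exp_lt_exp]
      linarith
    have h2 : Real.exp (-Real.log (4 * (m:ℝ) - 4)) = (4 * (m:ℝ) - 4)⁻¹ := by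
      rw [Real.exp_neg, Real.exp_log (by linarith)]
    have h3 : (4 * (m:ℝ) - 4)⁻¹ ≤ 1 / (2 * (m:ℝ)) := by
      rw [inv_eq_one_div]
      apply div_le_div_of_nonneg_left one_pos.le (by linarith)
      linarith
    linarith
  -- the quantity s
  set s : ℝ := 1 - 4 * Cpe p β ε * (((m:ℝ) - 1) / ((4 * m : ℕ) : ℝ)) with hsdef
  have hCpe : Cpe p β ε = 1 - A := rfl
  have hcastN : ((4 * m : ℕ) : ℝ) = 4 * (m:ℝ) := by push_cast; ring
  have hs_eq : (m:ℝ) * s = 1 + A * ((m:ℝ) - 1) := by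
    rw [hsdef, hCpe, hcastN]
    field_simp
    ring
  have hs0 : 0 < s := by nlinarith
  have hs6 : s ≤ 6 / ((4 * m : ℕ) : ℝ) := by
    rw [hcastN, le_div_iff₀ (by linarith : (0:ℝ) < 4 * (m:ℝ))]
    have hA2' : 2 * (m:ℝ) * A ≤ 1 := by
      rw [le_div_iff₀ (by linarith : (0:ℝ) < 2 * (m:ℝ))] at hA2
      linarith
    nlinarith [hs_eq, hA0, hmR]
  -- compute the two exponentials
  have hnode1 : expNode p (4 * m) β ε (4 * m / 4 - 1)
      = (ε / β) * ((p:ℝ) + 1) * (-Real.log s) := by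
    rw [hidx1, expNode, if_pos (by omega), gradedNode, phiFun]
    have : ((m - 1 : ℕ) : ℝ) = (m:ℝ) - 1 := by
      have : 1 ≤ m := by omega
      push_cast [this]; ring
    rw [this, hsdef]
  have hnode2 : 1 - expNode p (4 * m) β ε (3 * (4 * m) / 4 + 1)
      = (ε / β) * ((p:ℝ) + 1) * (-Real.log s) := by
    rw [hidx2, expNode, if_neg (by omega), if_neg (by omega), phiFun]
    have h4 : 4 * m - (3 * m + 1) = m - 1 := by omega
    have h5 : ((m - 1 : ℕ) : ℝ) = (m:ℝ) - 1 := by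
      have : 1 ≤ m := by omega
      push_cast [this]; ring
    rw [h4, h5, hsdef]
    ring
  rw [hnode1, hnode2, exp_node_pow p β ε s hβne hεne hs0]
  -- final estimate
  have hzpow : ((4 * m : ℕ) : ℝ) ^ (-((p:ℤ) + 1)) = (((4 * m : ℕ) : ℝ) ^ (p + 1))⁻¹ := by
    have : -((p:ℤ) + 1) = -((p + 1 : ℕ) : ℤ) := by push_cast; ring
    rw [this, zpow_neg, zpow_natCast]
  rw [hzpow]
  have hNpos : (0:ℝ) < ((4 * m : ℕ) : ℝ) := by rw [hcastN]; linarith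
  have hpow : s ^ (p + 1) ≤ (6 / ((4 * m : ℕ) : ℝ)) ^ (p + 1) :=
    pow_le_pow_left₀ hs0.le hs6 _
  have hdiv : (6 / ((4 * m : ℕ) : ℝ)) ^ (p + 1)
      = 6 ^ (p + 1) * (((4 * m : ℕ) : ℝ) ^ (p + 1))⁻¹ := by
    rw [div_pow]; ring
  rw [hdiv] at hpow
  linarith
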